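/- Any morphism of split extensions between two weak semidirect products N ⋊_{E,φ} H and N ⋊_{E',φ'} H (i.e. a monoid homomorphism f commuting with the kernels, cokernels and sections) necessarily satisfies f([n],h) = ([n],h); in particular there is at most one such morphism. -/
import Mathlib


/-- An admissible H-indexed equivalence relation E on N: for each h an equivalence
relation ∼^h on N such that ∼^1 is equality, left multiplication preserves ∼^h, and
n ∼^h n' implies n ∼^{h·y} n'. -/
structure IndexedEqv (H N : Type*) [Monoid H] [Monoid N] where
  r : H → N → N → Prop
  iseqv : ∀ h, Equivalence (r h)
  one_eq : ∀ {n n' : N}, r 1 n n' → n = n'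
  mul_left : ∀ (x : N) {h : H} {n n' : N}, r h n n' → r h (x * n) (x * n')
  mul_right : ∀ (y : H) {h : H} {n n' : N}, r h n n' → r (h * y) n n'

def IndexedEqv.setoid {H N : Type*} [Monoid H] [Monoid N] (E : IndexedEqv H N) (h : H) :
    Setoid N := ⟨E.r h, E.iseqv h⟩

/-- α : H × N → N is a compatible action for the admissible indexed equivalence relation E. -/
structure CompatibleAction {H N : Type*} [Monoid H] [Monoid N] (E : IndexedEqv H N)
    (α : H → N → N) : Prop where
  c1 : ∀ (h : H) (n n' x : N), E.r h n n' → E.r h (n * α h x) (n' * α h x)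
  c2 : ∀ (h : H) (n n' : N) (x : H), E.r h n n' → E.r (x * h) (α x n) (α x n')
  c3 : ∀ (h : H) (n n' : N), E.r h (α h (n * n')) (α h n * α h n')
  c4 : ∀ (h h' : H) (n : N), E.r (h * h') (α (h * h') n) (α h (α h' n))
  c5 : ∀ h : H, E.r h (α h 1) 1
  c6 : ∀ n : N, E.r 1 (α 1 n) n

/-- The carrier ⨆_{h ∈ H} N/∼^h of the weak semidirect product. -/
def WProd {H N : Type*} [Monoid H] [Monoid N] (E : IndexedEqv H N) : Type _ :=
  (h : H) × Quotient (E.setoid h)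

/-- The element ([n], h). -/
def wmk {H N : Type*} [Monoid H] [Monoid N] (E : IndexedEqv H N) (h : H) (n : N) : WProd E :=
  ⟨h, Quotient.mk (E.setoid h) n⟩

/-- The multiplication ([n],h)·([n'],h') = ([n·α(h,n')], h·h') of the weak semidirect
product N ⋊_{E,α} H. -/
def wmul {H N : Type*} [Monoid H] [Monoid N] (E : IndexedEqv H N) {α : H → N → N}
    (hα : CompatibleAction E α) : WProd E → WProd E → WProd E :=
  fun x y =>
    ⟨x.1 * y.1,
      Quotient.liftOn₂ x.2 y.2
        (fun n n' => Quotient.mk (E.setoid (x.1 * y.1)) (n * α x.1 n'))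
        (fun a c b d hab hcd =>
          Quotient.sound
            ((E.iseqv (x.1 * y.1)).trans
              (E.mul_right y.1 (hα.c1 x.1 a b c hab))
              (E.mul_left b (hα.c2 y.1 c d x.1 hcd))))⟩

lemma wmul_mk_mk {H N : Type*} [Monoid H] [Monoid N] (E : IndexedEqv H N) {α : H → N → N}
    (hα : CompatibleAction E α) (h : H) (n : N) :
    wmul E hα (wmk E 1 n) (wmk E h 1) = wmk E (1 * h) n := by
  show (⟨1 * h, Quotient.mk (E.setoid (1 * h)) (n * α 1 1)⟩ : WProd E) = _
  refine congrArg _ (Quotient.sound ?_)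
  have h1 : E.r 1 (n * α 1 1) n := by
    have := E.mul_left n (hα.c5 1)
    rwa [mul_one] at this
  exact E.mul_right h h1

lemma wprod_morphism_eq {H N : Type*} [Monoid H] [Monoid N]
    (E E' : IndexedEqv H N) (α α' : H → N → N)
    (hα : CompatibleAction E α) (hα' : CompatibleAction E' α')
    (f : WProd E → WProd E')
    (hmul : ∀ x y, f (wmul E hα x y) = wmul E' hα' (f x) (f y))
    (hk : ∀ n : N, f (wmk E 1 n) = wmk E' 1 n)
    (hsec : ∀ h : H, f (wmk E h 1) = wmk E' h 1) :
    ∀ (h : H) (n : N), f (wmk E h n) = wmk E' h n := by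
  intro h n
  have key : f (wmk E (1 * h) n) = wmk E' (1 * h) n := by
    rw [← wmul_mk_mk E hα h n, hmul, hk, hsec, wmul_mk_mk E' hα' h n]
  rwa [one_mul] at key

/-- Any morphism of split extensions between two weak semidirect products
N ⋊_{E,α} H and N ⋊_{E',α'} H — i.e. a monoid homomorphism f commuting with the kernel maps
k(n) = ([n],1), the cokernel maps e([n],h) = h and the sections s(h) = ([1],h) — necessarily
satisfies f([n],h) = ([n],h).  In particular there is at most one such morphism. -/
theorem wprod_morphism_unique {H N : Type*} [Monoid H] [Monoid N]
    (E E' : IndexedEqv H N) (α α' : H → N → N)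
    (hα : CompatibleAction E α) (hα' : CompatibleAction E' α')
    (f : WProd E → WProd E')
    (hmul : ∀ x y, f (wmul E hα x y) = wmul E' hα' (f x) (f y))
    (hone : f (wmk E 1 1) = wmk E' 1 1)
    (hk : ∀ n : N, f (wmk E 1 n) = wmk E' 1 n)
    (he : ∀ x : WProd E, (f x).1 = x.1)
    (hsec : ∀ h : H, f (wmk E h 1) = wmk E' h 1) :
    (∀ (h : H) (n : N), f (wmk E h n) = wmk E' h n) ∧
    ∀ f' : WProd E → WProd E',
      (∀ x y, f' (wmul E hα x y) = wmul E' hα' (f' x) (f' y)) →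
      (∀ n : N, f' (wmk E 1 n) = wmk E' 1 n) →
      (∀ h : H, f' (wmk E h 1) = wmk E' h 1) → f' = f := by
  refine ⟨wprod_morphism_eq E E' α α' hα hα' f hmul hk hsec, ?_⟩
  intro f' hmul' hk' hsec'
  funext x
  obtain ⟨h, q⟩ := x
  induction q using Quotient.ind with
  | _ n =>
    show f' (wmk E h n) = f (wmk E h n)
    rw [wprod_morphism_eq E E' α α' hα hα' f' hmul' hk' hsec',
      wprod_morphism_eq E E' α α' hα hα' f hmul hk hsec]
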